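/- Let 1 < α < 2, let m : Ω → ℝ be measurable with m ≥ 0 a.e. on a measure space (Ω, Σ, μ), and assume the estimate |λ t^α E_{α,1}(-λ t^α)| ≤ C' · λt^α/(1+λt^α) for all λ, t ≥ 0 (which follows from |E_{α,1}(-x)| ≤ C/(1+x)). Then for 0 < t < t+h and every u₁ ∈ L²(μ) with m^{1/2} well-defined, the bound ‖m^{1/2}[(t+h)E_{α,2}(-m(·)(t+h)^α) - t E_{α,2}(-m(·) t^α)] u₁‖_{L²(μ)} ≤ (C m₀^{-1/2}/(α-1)) (t^{-(α-1)} - (t+h)^{-(α-1)}) ‖u₁‖_{L²(μ)} holds, where m ≥ m₀ > 0 a.e. -/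

import Mathlib

open MeasureTheory

/-- The real Mittag-Leffler function `E_{α,β}(x) = ∑ x^n / Γ(αn + β)`. -/
noncomputable def mittagLeffler (α β x : ℝ) : ℝ :=
  ∑' n : ℕ, x ^ n / Real.Gamma (α * n + β)

lemma ml_summable {α β : ℝ} (hα : 1 ≤ α) (hβ : 1 ≤ β) (x : ℝ) :
    Summable (fun n : ℕ => x ^ n / Real.Gamma (α * n + β)) := by
  have hΓ : ∀ n : ℕ, 0 < Real.Gamma (α * n + β) := by
    intro n
    apply Real.Gamma_pos_of_pos
    have h1 : (0:ℝ) ≤ α * n := mul_nonneg (by linarith) (Nat.cast_nonneg n)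
    linarith
  have hfac : ∀ n : ℕ, 1 ≤ n → ((n.factorial : ℝ)) ≤ Real.Gamma (α * n + β) := by
    intro n hn
    have hn1 : (1:ℝ) ≤ (n:ℝ) := by exact_mod_cast hn
    have h1 : ((n:ℝ) + 1) ≤ α * n + β := by nlinarith
    have h2 : (2:ℝ) ≤ (n:ℝ) + 1 := by linarith
    calc ((n.factorial : ℝ)) = Real.Gamma ((n:ℝ) + 1) := (Real.Gamma_nat_eq_factorial n).symm
      _ ≤ Real.Gamma (α * n + β) := by
          rcases eq_or_lt_of_le h1 with h | h
          · rw [h]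
          · exact (Real.Gamma_strictMonoOn_Ici (Set.mem_Ici.mpr h2)
              (Set.mem_Ici.mpr (h2.trans h1)) h).le
  set c := max 1 (1 / Real.Gamma β) with hc
  refine Summable.of_norm_bounded (g := fun n => c * (|x| ^ n / (n.factorial : ℝ)))
    ((Real.summable_pow_div_factorial |x|).mul_left c) ?_
  intro n
  simp only [norm_div, norm_pow, Real.norm_eq_abs]
  rw [abs_of_pos (hΓ n)]
  rcases Nat.eq_zero_or_pos n with rfl | hn
  · simp only [pow_zero, Nat.factorial_zero, Nat.cast_one, Nat.cast_zero, mul_zero, zero_add,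
      div_one, mul_one]
    exact le_max_right 1 (1 / Real.Gamma β)
  · have h1 := hfac n hn
    have hfpos : (0:ℝ) < n.factorial := by exact_mod_cast n.factorial_pos
    calc |x| ^ n / Real.Gamma (α * n + β) ≤ |x| ^ n / (n.factorial : ℝ) := by
          gcongr
      _ ≤ c * (|x| ^ n / (n.factorial : ℝ)) :=
          le_mul_of_one_le_left (by positivity) (le_max_left _ _)

lemma ml_diff_eq_integral {α : ℝ} (hα1 : 1 < α) (lam : ℝ) (hlam : 0 ≤ lam)
    (t h : ℝ) (ht : 0 < t) (hh : 0 < h) :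
    (t + h) * mittagLeffler α 2 (-lam * (t + h) ^ α) - t * mittagLeffler α 2 (-lam * t ^ α)
      = ∫ s in Set.Ioc t (t + h), mittagLeffler α 1 (-lam * s ^ α) := by
  have hα0 : (0:ℝ) < α := by linarith
  have hth : 0 < t + h := by linarith
  have hΓ1 : ∀ n : ℕ, 0 < Real.Gamma (α * n + 1) := by
    intro n
    apply Real.Gamma_pos_of_pos
    have h1 : (0:ℝ) ≤ α * n := mul_nonneg (by linarith) (Nat.cast_nonneg n)
    linarith
  have hΓ2 : ∀ n : ℕ, 0 < Real.Gamma (α * n + 2) := by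
    intro n
    apply Real.Gamma_pos_of_pos
    have h1 : (0:ℝ) ≤ α * n := mul_nonneg (by linarith) (Nat.cast_nonneg n)
    linarith
  -- expansion of s * E_{α,2}(-lam s^α)
  have expand : ∀ s : ℝ, 0 < s → s * mittagLeffler α 2 (-lam * s ^ α)
      = ∑' n : ℕ, (-lam) ^ n * s ^ (α * n + 1) / Real.Gamma (α * n + 2) := by
    intro s hs
    rw [mittagLeffler, ← tsum_mul_left]
    congr 1
    funext n
    have h1 : (-lam * s ^ α) ^ n = (-lam) ^ n * s ^ (α * (n:ℝ)) := by
      rw [mul_pow, ← Real.rpow_natCast (s ^ α) n, ← Real.rpow_mul hs.le]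
    rw [h1, show s ^ (α * (n:ℝ) + 1) = s ^ (α * (n:ℝ)) * s by
      rw [Real.rpow_add hs, Real.rpow_one]]
    ring
  have sum_term : ∀ s : ℝ, 0 < s →
      Summable (fun n : ℕ => (-lam) ^ n * s ^ (α * n + 1) / Real.Gamma (α * n + 2)) := by
    intro s hs
    refine Summable.of_norm_bounded
      (g := fun n => s * ((lam * s ^ α) ^ n / Real.Gamma (α * n + 2)))
      ((ml_summable hα1.le one_le_two (lam * s ^ α)).mul_left s) ?_
    intro n
    have hsa : (0:ℝ) ≤ s ^ (α * (n:ℝ) + 1) := Real.rpow_nonneg hs.le _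
    rw [norm_div, Real.norm_eq_abs, Real.norm_eq_abs, abs_of_pos (hΓ2 n), abs_mul, abs_pow,
      abs_neg, abs_of_nonneg hlam, abs_of_nonneg hsa]
    apply le_of_eq
    have h2 : lam ^ n * s ^ (α * (n:ℝ) + 1) = s * (lam * s ^ α) ^ n := by
      rw [mul_pow, ← Real.rpow_natCast (s ^ α) n, ← Real.rpow_mul hs.le, Real.rpow_add hs,
        Real.rpow_one]
      ring
    rw [h2]
    ring
  -- termwise integral
  have term_int : ∀ n : ℕ,
      (∫ s in Set.Ioc t (t + h), (-lam) ^ n * s ^ (α * (n:ℝ)) / Real.Gamma (α * n + 1))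
      = (-lam) ^ n * (t + h) ^ (α * n + 1) / Real.Gamma (α * n + 2)
        - (-lam) ^ n * t ^ (α * n + 1) / Real.Gamma (α * n + 2) := by
    intro n
    rw [← intervalIntegral.integral_of_le (by linarith : t ≤ t + h)]
    have hre : ∀ s : ℝ, (-lam) ^ n * s ^ (α * (n:ℝ)) / Real.Gamma (α * n + 1)
        = ((-lam) ^ n / Real.Gamma (α * n + 1)) * s ^ (α * (n:ℝ)) := fun s => by ring
    simp only [hre]
    rw [intervalIntegral.integral_const_mul,
      integral_rpow (Or.inl (show (-1:ℝ) < α * n by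
        have h6 : (0:ℝ) ≤ α * n := mul_nonneg hα0.le (Nat.cast_nonneg n)
        linarith))]
    have hΓadd : Real.Gamma (α * n + 2) = (α * n + 1) * Real.Gamma (α * n + 1) := by
      have h0 : (α * (n:ℝ) + 1) ≠ 0 := by positivity
      have h3 := Real.Gamma_add_one h0
      rw [show (α * (n:ℝ) + 1 + 1) = α * n + 2 by ring] at h3
      exact h3
    have h4 : Real.Gamma (α * n + 1) ≠ 0 := (hΓ1 n).ne'
    have h5 : (α * (n:ℝ) + 1) ≠ 0 := by positivity
    rw [hΓadd]
    field_simp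
  -- measurability and integrability of the terms
  have hmeas : ∀ n : ℕ,
      Measurable (fun s : ℝ => (-lam) ^ n * s ^ (α * (n:ℝ)) / Real.Gamma (α * n + 1)) := by
    intro n
    fun_prop
  have hint : ∀ n : ℕ, IntegrableOn
      (fun s : ℝ => (-lam) ^ n * s ^ (α * (n:ℝ)) / Real.Gamma (α * n + 1))
      (Set.Ioc t (t + h)) := by
    intro n
    refine Integrable.mono'
      (g := fun _ => lam ^ n * (t + h) ^ (α * (n:ℝ)) / Real.Gamma (α * n + 1))
      (Iff.mpr integrableOn_const_iff (Or.inr measure_Ioc_lt_top))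
      ((hmeas n).aestronglyMeasurable) ?_
    refine (ae_restrict_iff' measurableSet_Ioc).mpr (Filter.Eventually.of_forall ?_)
    intro s hs
    have hs0 : 0 < s := ht.trans hs.1
    have hsa : (0:ℝ) ≤ s ^ (α * (n:ℝ)) := Real.rpow_nonneg hs0.le _
    rw [norm_div, Real.norm_eq_abs, Real.norm_eq_abs, abs_of_pos (hΓ1 n), abs_mul, abs_pow,
      abs_neg, abs_of_nonneg hlam, abs_of_nonneg hsa]
    refine div_le_div_of_nonneg_right ?_ (hΓ1 n).le |>.trans_eq rfl
    exact mul_le_mul_of_nonneg_left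
      (Real.rpow_le_rpow hs0.le hs.2 (mul_nonneg hα0.le (Nat.cast_nonneg n)))
      (pow_nonneg hlam n)
  -- norm integral bound
  have hnorm_int : ∀ n : ℕ,
      (∫ s in Set.Ioc t (t + h),
        ‖(-lam) ^ n * s ^ (α * (n:ℝ)) / Real.Gamma (α * n + 1)‖)
      ≤ (lam * (t + h) ^ α) ^ n / Real.Gamma (α * n + 1) * h := by
    intro n
    have hconst : (lam * (t + h) ^ α) ^ n / Real.Gamma (α * n + 1)
        = lam ^ n * (t + h) ^ (α * (n:ℝ)) / Real.Gamma (α * n + 1) := by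
      rw [mul_pow, ← Real.rpow_natCast ((t + h) ^ α) n, ← Real.rpow_mul hth.le]
    have hb : ∀ s ∈ Set.Ioc t (t + h),
        ‖(-lam) ^ n * s ^ (α * (n:ℝ)) / Real.Gamma (α * n + 1)‖
        ≤ lam ^ n * (t + h) ^ (α * (n:ℝ)) / Real.Gamma (α * n + 1) := by
      intro s hs
      have hs0 : 0 < s := ht.trans hs.1
      have hsa : (0:ℝ) ≤ s ^ (α * (n:ℝ)) := Real.rpow_nonneg hs0.le _
      rw [norm_div, Real.norm_eq_abs, Real.norm_eq_abs, abs_of_pos (hΓ1 n), abs_mul, abs_pow,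
        abs_neg, abs_of_nonneg hlam, abs_of_nonneg hsa]
      refine div_le_div_of_nonneg_right ?_ (hΓ1 n).le |>.trans_eq rfl
      exact mul_le_mul_of_nonneg_left
        (Real.rpow_le_rpow hs0.le hs.2 (mul_nonneg hα0.le (Nat.cast_nonneg n)))
        (pow_nonneg hlam n)
    calc (∫ s in Set.Ioc t (t + h), ‖(-lam) ^ n * s ^ (α * (n:ℝ)) / Real.Gamma (α * n + 1)‖)
        ≤ ∫ _s in Set.Ioc t (t + h),
            (lam ^ n * (t + h) ^ (α * (n:ℝ)) / Real.Gamma (α * n + 1)) := by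
          refine integral_mono_ae ((hint n).norm)
            (Iff.mpr integrableOn_const_iff (Or.inr measure_Ioc_lt_top)) ?_
          exact (ae_restrict_iff' measurableSet_Ioc).mpr (Filter.Eventually.of_forall hb)
      _ = (lam * (t + h) ^ α) ^ n / Real.Gamma (α * n + 1) * h := by
          rw [setIntegral_const, hconst, measureReal_def, Real.volume_Ioc, smul_eq_mul,
            ENNReal.toReal_ofReal (by linarith : (0:ℝ) ≤ t + h - t)]
          ring_nf
  have hsum_norm : Summable (fun n : ℕ =>
      ∫ s in Set.Ioc t (t + h),
        ‖(-lam) ^ n * s ^ (α * (n:ℝ)) / Real.Gamma (α * n + 1)‖) := by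
    refine Summable.of_nonneg_of_le
      (fun n => integral_nonneg fun s => norm_nonneg _) hnorm_int ?_
    exact (ml_summable hα1.le le_rfl (lam * (t + h) ^ α)).mul_right h
  have interch := integral_tsum_of_summable_integral_norm hint hsum_norm
  have hML : Set.EqOn
      (fun s : ℝ => ∑' n : ℕ, (-lam) ^ n * s ^ (α * (n:ℝ)) / Real.Gamma (α * n + 1))
      (fun s : ℝ => mittagLeffler α 1 (-lam * s ^ α)) (Set.Ioc t (t + h)) := by
    intro s hs
    have hs0 : 0 < s := ht.trans hs.1
    simp only [mittagLeffler]
    congr 1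
    funext n
    rw [mul_pow, ← Real.rpow_natCast (s ^ α) n, ← Real.rpow_mul hs0.le]
  calc (t + h) * mittagLeffler α 2 (-lam * (t + h) ^ α) - t * mittagLeffler α 2 (-lam * t ^ α)
      = (∑' n : ℕ, (-lam) ^ n * (t + h) ^ (α * n + 1) / Real.Gamma (α * n + 2))
        - ∑' n : ℕ, (-lam) ^ n * t ^ (α * n + 1) / Real.Gamma (α * n + 2) := by
        rw [expand (t + h) hth, expand t ht]
    _ = ∑' n : ℕ, ((-lam) ^ n * (t + h) ^ (α * n + 1) / Real.Gamma (α * n + 2)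
        - (-lam) ^ n * t ^ (α * n + 1) / Real.Gamma (α * n + 2)) :=
        (Summable.tsum_sub (sum_term (t + h) hth) (sum_term t ht)).symm
    _ = ∑' n : ℕ, ∫ s in Set.Ioc t (t + h),
          (-lam) ^ n * s ^ (α * (n:ℝ)) / Real.Gamma (α * n + 1) := by
        exact tsum_congr fun n => (term_int n).symm
    _ = ∫ s in Set.Ioc t (t + h),
          ∑' n : ℕ, (-lam) ^ n * s ^ (α * (n:ℝ)) / Real.Gamma (α * n + 1) := interch
    _ = ∫ s in Set.Ioc t (t + h), mittagLeffler α 1 (-lam * s ^ α) :=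
        setIntegral_congr_fun measurableSet_Ioc hML

lemma ml_diff_bound {α : ℝ} (hα1 : 1 < α) {C : ℝ} (hC : 0 < C)
    (hE : ∀ x : ℝ, 0 ≤ x → |mittagLeffler α 1 (-x)| ≤ C / (1 + x))
    (lam : ℝ) (hlam : 0 < lam) (t h : ℝ) (ht : 0 < t) (hh : 0 < h) :
    |(t + h) * mittagLeffler α 2 (-lam * (t + h) ^ α) - t * mittagLeffler α 2 (-lam * t ^ α)|
      ≤ C / (lam * (α - 1)) * (t ^ (-(α - 1)) - (t + h) ^ (-(α - 1))) := by
  have hα0 : (0:ℝ) < α := by linarith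
  have hth : 0 < t + h := by linarith
  rw [ml_diff_eq_integral hα1 lam hlam.le t h ht hh]
  -- measurability of the composite Mittag-Leffler function
  have hMLmeas : Measurable (fun s : ℝ => mittagLeffler α 1 (-lam * s ^ α)) := by
    have heq : (fun s : ℝ => mittagLeffler α 1 (-lam * s ^ α))
        = fun s : ℝ => ∑' n : ℕ, (-lam * s ^ α) ^ n / Real.Gamma (α * n + 1) := rfl
    rw [heq]
    apply measurable_of_tendsto_metrizable
      (f := fun N : ℕ => fun s : ℝ =>
        ∑ n ∈ Finset.range N, (-lam * s ^ α) ^ n / Real.Gamma (α * n + 1))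
    · intro N
      apply Finset.measurable_sum
      intro n _
      fun_prop
    · rw [tendsto_pi_nhds]
      intro s
      exact (ml_summable hα1.le le_rfl (-lam * s ^ α)).hasSum.tendsto_sum_nat
  -- pointwise bound on the set
  have hptwise : ∀ s ∈ Set.Ioc t (t + h),
      |mittagLeffler α 1 (-lam * s ^ α)| ≤ C / lam * s ^ (-α) := by
    intro s hs
    have hs0 : 0 < s := ht.trans hs.1
    have hx : (0:ℝ) < lam * s ^ α := mul_pos hlam (Real.rpow_pos_of_pos hs0 α)
    have h1 : |mittagLeffler α 1 (-(lam * s ^ α))| ≤ C / (1 + lam * s ^ α) :=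
      hE (lam * s ^ α) hx.le
    rw [← neg_mul] at h1
    have h2 : C / (1 + lam * s ^ α) ≤ C / (lam * s ^ α) :=
      div_le_div_of_nonneg_left hC.le hx (by linarith)
    have h3 : C / lam * s ^ (-α) = C / (lam * s ^ α) := by
      rw [Real.rpow_neg hs0.le]
      field_simp
    rw [h3]
    exact h1.trans h2
  -- integrability of the composite
  have hMLint : IntegrableOn (fun s : ℝ => mittagLeffler α 1 (-lam * s ^ α))
      (Set.Ioc t (t + h)) := by
    refine Integrable.mono' (g := fun _ => C)
      (Iff.mpr integrableOn_const_iff (Or.inr measure_Ioc_lt_top))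
      hMLmeas.aestronglyMeasurable ?_
    refine (ae_restrict_iff' measurableSet_Ioc).mpr (Filter.Eventually.of_forall ?_)
    intro s hs
    have hs0 : 0 < s := ht.trans hs.1
    have hx : (0:ℝ) < lam * s ^ α := mul_pos hlam (Real.rpow_pos_of_pos hs0 α)
    have h1 : |mittagLeffler α 1 (-(lam * s ^ α))| ≤ C / (1 + lam * s ^ α) :=
      hE (lam * s ^ α) hx.le
    rw [← neg_mul] at h1
    rw [Real.norm_eq_abs]
    exact h1.trans (div_le_self hC.le (by linarith))
  -- integrability of the dominating function
  have hgint : IntegrableOn (fun s : ℝ => C / lam * s ^ (-α)) (Set.Ioc t (t + h)) := by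
    refine Integrable.mono' (g := fun _ => C / lam * t ^ (-α))
      (Iff.mpr integrableOn_const_iff (Or.inr measure_Ioc_lt_top))
      ((by fun_prop : Measurable fun s : ℝ => C / lam * s ^ (-α)).aestronglyMeasurable) ?_
    refine (ae_restrict_iff' measurableSet_Ioc).mpr (Filter.Eventually.of_forall ?_)
    intro s hs
    have hs0 : 0 < s := ht.trans hs.1
    have h1 : s ^ (-α) ≤ t ^ (-α) :=
      Real.rpow_le_rpow_of_nonpos ht hs.1.le (by linarith)
    rw [Real.norm_eq_abs, abs_mul, abs_of_nonneg (by positivity : (0:ℝ) ≤ C / lam),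
      abs_of_nonneg (Real.rpow_nonneg hs0.le _)]
    exact mul_le_mul_of_nonneg_left h1 (by positivity)
  calc |∫ s in Set.Ioc t (t + h), mittagLeffler α 1 (-lam * s ^ α)|
      ≤ ∫ s in Set.Ioc t (t + h), |mittagLeffler α 1 (-lam * s ^ α)| := by
        simpa [Real.norm_eq_abs] using
          norm_integral_le_integral_norm (μ := volume.restrict (Set.Ioc t (t + h)))
            (fun s : ℝ => mittagLeffler α 1 (-lam * s ^ α))
    _ ≤ ∫ s in Set.Ioc t (t + h), C / lam * s ^ (-α) := by
        refine integral_mono_ae hMLint.abs hgint ?_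
        exact (ae_restrict_iff' measurableSet_Ioc).mpr (Filter.Eventually.of_forall hptwise)
    _ = C / (lam * (α - 1)) * (t ^ (-(α - 1)) - (t + h) ^ (-(α - 1))) := by
        rw [← intervalIntegral.integral_of_le (by linarith : t ≤ t + h),
          intervalIntegral.integral_const_mul,
          integral_rpow (Or.inr ⟨by intro hcon; linarith [neg_injective hcon],
            Set.notMem_uIcc_of_lt ht hth⟩)]
        rw [show (-α + 1 : ℝ) = -(α - 1) by ring]
        have h1 : α - 1 ≠ 0 := by linarith
        have h2 : lam ≠ 0 := hlam.ne'
        set A := t ^ (-(α - 1)) with hA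
        set B := (t + h) ^ (-(α - 1)) with hB
        rw [div_mul_div_comm, div_mul_eq_mul_div,
          div_eq_div_iff (by simp [h2]; intro hcon; exact h1 (by linarith))
            (mul_ne_zero h2 h1)]
        ring

/-- Continuity estimate for `t ↦ t E_{α,2}(-m(·)t^α) u₁` in `V_{1/2}`:
`‖m^{1/2}[(t+h)E_{α,2}(-m(t+h)^α) - t E_{α,2}(-m t^α)]u₁‖_{L²}
  ≤ (C m₀^{-1/2}/(α-1)) (t^{-(α-1)} - (t+h)^{-(α-1)}) ‖u₁‖_{L²}`. -/
theorem S2_continuity_estimate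
    {Ω : Type*} [MeasurableSpace Ω] (μ : Measure Ω)
    (m : Ω → ℝ) (hm : Measurable m) (m₀ : ℝ) (hm₀ : 0 < m₀)
    (hlow : ∀ᵐ x ∂μ, m₀ ≤ m x)
    (α : ℝ) (hα1 : 1 < α) (hα2 : α < 2)
    (C : ℝ) (hC : 0 < C)
    (hE : ∀ x : ℝ, 0 ≤ x → |mittagLeffler α 1 (-x)| ≤ C / (1 + x))
    (hE' : ∀ lam t : ℝ, 0 ≤ lam → 0 ≤ t →
      |lam * t ^ α * mittagLeffler α 1 (-lam * t ^ α)| ≤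
        C * (lam * t ^ α / (1 + lam * t ^ α)))
    (u₁ : Ω → ℝ) (hu₁ : MemLp u₁ 2 μ)
    (t h : ℝ) (ht : 0 < t) (hh : 0 < h) :
    eLpNorm
        (fun x => m x ^ ((1 : ℝ) / 2) *
          ((t + h) * mittagLeffler α 2 (-(m x) * (t + h) ^ α) -
            t * mittagLeffler α 2 (-(m x) * t ^ α)) * u₁ x) 2 μ ≤
      ENNReal.ofReal
          (C * m₀ ^ (-(1 : ℝ) / 2) / (α - 1) *
            (t ^ (-(α - 1)) - (t + h) ^ (-(α - 1)))) *
        eLpNorm u₁ 2 μ := by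
  have hα0 : (0:ℝ) < α - 1 := by linarith
  set D := t ^ (-(α - 1)) - (t + h) ^ (-(α - 1)) with hD
  have hD0 : 0 ≤ D := by
    have h1 : (t + h) ^ (-(α - 1)) ≤ t ^ (-(α - 1)) :=
      Real.rpow_le_rpow_of_nonpos ht (by linarith) (by linarith)
    rw [hD]; linarith
  set K := C * m₀ ^ (-(1 : ℝ) / 2) / (α - 1) * D with hK
  have hm₀r : (0:ℝ) ≤ m₀ ^ (-(1 : ℝ) / 2) := Real.rpow_nonneg hm₀.le _
  have hKnonneg : 0 ≤ K := by
    apply mul_nonneg (div_nonneg (mul_nonneg hC.le hm₀r) hα0.le) hD0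
  have hbound : ∀ᵐ x ∂μ,
      ‖m x ^ ((1 : ℝ) / 2) *
        ((t + h) * mittagLeffler α 2 (-(m x) * (t + h) ^ α) -
          t * mittagLeffler α 2 (-(m x) * t ^ α)) * u₁ x‖ ≤ ‖(K • u₁) x‖ := by
    filter_upwards [hlow] with x hx
    have hmx : 0 < m x := lt_of_lt_of_le hm₀ hx
    have hdiff := ml_diff_bound hα1 hC hE (m x) hmx t h ht hh
    rw [Pi.smul_apply, smul_eq_mul, Real.norm_eq_abs, Real.norm_eq_abs, abs_mul, abs_mul,
      abs_mul, abs_of_nonneg (Real.rpow_nonneg hmx.le ((1:ℝ)/2))]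
    refine mul_le_mul_of_nonneg_right (le_trans ?_ (le_abs_self K)) (abs_nonneg _)
    calc m x ^ ((1:ℝ)/2) *
          |(t + h) * mittagLeffler α 2 (-(m x) * (t + h) ^ α) -
            t * mittagLeffler α 2 (-(m x) * t ^ α)|
        ≤ m x ^ ((1:ℝ)/2) * (C / (m x * (α - 1)) * D) :=
          mul_le_mul_of_nonneg_left hdiff (Real.rpow_nonneg hmx.le _)
      _ = C / (α - 1) * D * (m x ^ ((-(1:ℝ))/2)) := by
          have h1 : m x ^ ((-(1:ℝ))/2) = m x ^ ((1:ℝ)/2) / m x := by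
            rw [show ((-(1:ℝ))/2) = (1:ℝ)/2 - 1 by norm_num, Real.rpow_sub hmx,
              Real.rpow_one]
          rw [h1]
          field_simp
      _ ≤ C / (α - 1) * D * (m₀ ^ ((-(1:ℝ))/2)) := by
          refine mul_le_mul_of_nonneg_left
            (Real.rpow_le_rpow_of_nonpos hm₀ hx (by norm_num))
            (mul_nonneg (div_nonneg hC.le hα0.le) hD0)
      _ = K := by rw [hK]; ring
  refine le_trans (eLpNorm_mono_ae hbound) (le_of_eq ?_)
  rw [eLpNorm_const_smul K u₁ 2 μ, Real.enorm_eq_ofReal hKnonneg]
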